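/- Let q ≥ 2 be an integer and let r, s, n be integers with 2 ≤ r ≤ n/2, 1 ≤ s < n, and s·r ≤ n. Then ∏_{i=0}^{r-1} (q^{n-is} - 1)/(q^{r-i} - 1) > q^{r(n-r) - (s-1)·r(r-1)/2}. -/

import Mathlib

/-- If `q ≥ 2`, `2 ≤ r ≤ n/2`, `1 ≤ s < n`, `s·r ≤ n`, then
`∏_{i=0}^{r-1} (q^{n-is} - 1)/(q^{r-i} - 1) > q^{r(n-r) - (s-1)·r(r-1)/2}`. -/
theorem stmt2 (q r s n : ℕ) (hq : 2 ≤ q) (hr : 2 ≤ r) (hrn : 2 * r ≤ n) (hs : 1 ≤ s)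
    (hsn : s < n) (hsr : s * r ≤ n) :
    (q : ℚ) ^ (r * (n - r) - (s - 1) * (r * (r - 1) / 2)) <
      ∏ i ∈ Finset.range r, (((q : ℚ) ^ (n - i * s) - 1) / ((q : ℚ) ^ (r - i) - 1)) := by
  have hq1 : (1 : ℚ) < (q : ℚ) := by exact_mod_cast lt_of_lt_of_le one_lt_two hq
  set e : ℕ → ℕ := fun i => n - i * s - (r - i) with he
  have key : ∀ i ∈ Finset.range r, i * s + (r - i) + 1 ≤ n := by
    intro i hi
    have hi' : i < r := Finset.mem_range.mp hi
    have h1 : (i + 1) * s ≤ r * s := Nat.mul_le_mul_right s hi'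
    have h2' : r * s ≤ n := by rwa [mul_comm] at hsr
    rcases Nat.lt_or_ge s 2 with hs2 | hs2
    · -- s = 1
      interval_cases s
      omega
    · have h3 : i * s + (r - i) * s = r * s := by
        rw [← Nat.add_mul, Nat.add_sub_cancel' hi'.le]
      have h4 : (r - i) * 2 ≤ (r - i) * s := Nat.mul_le_mul_left _ hs2
      omega
  have epos : ∀ i ∈ Finset.range r, 1 ≤ e i := by
    intro i hi
    have := key i hi
    simp only [he]
    omega
  have step : ∀ i ∈ Finset.range r,
      (q : ℚ) ^ (e i) < ((q : ℚ) ^ (n - i * s) - 1) / ((q : ℚ) ^ (r - i) - 1) := by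
    intro i hi
    have hi' : i < r := Finset.mem_range.mp hi
    have hk := key i hi
    have hden : (0 : ℚ) < (q : ℚ) ^ (r - i) - 1 := by
      have : (1 : ℚ) < (q : ℚ) ^ (r - i) := one_lt_pow₀ hq1 (by omega)
      linarith
    rw [lt_div_iff₀ hden]
    have hexp : e i + (r - i) = n - i * s := by
      simp only [he]; omega
    have heq : (q : ℚ) ^ (e i) * ((q : ℚ) ^ (r - i) - 1)
        = (q : ℚ) ^ (n - i * s) - (q : ℚ) ^ (e i) := by
      rw [mul_sub, mul_one, ← pow_add, hexp]
    rw [heq]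
    have : (1 : ℚ) < (q : ℚ) ^ (e i) := one_lt_pow₀ hq1 (by have := epos i hi; omega)
    linarith
  have hT : (∑ i ∈ Finset.range r, i) * 2 = r * (r - 1) := Finset.sum_range_id_mul_two r
  have hsum : (∑ i ∈ Finset.range r, e i) + (s - 1) * (∑ i ∈ Finset.range r, i)
      = r * (n - r) := by
    rw [Finset.mul_sum, ← Finset.sum_add_distrib]
    rw [show r * (n - r) = ∑ _i ∈ Finset.range r, (n - r) by
      rw [Finset.sum_const, Finset.card_range, smul_eq_mul]]
    refine Finset.sum_congr rfl fun i hi => ?_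
    have hk := key i hi
    have hi' : i < r := Finset.mem_range.mp hi
    have h' : (s - 1) * i + i = i * s := by
      rw [Nat.sub_mul, one_mul, Nat.sub_add_cancel (Nat.le_mul_of_pos_left i hs), mul_comm]
    simp only [he]
    omega
  have hdiv : (s - 1) * (r * (r - 1) / 2) = (s - 1) * (∑ i ∈ Finset.range r, i) := by
    congr 1
    omega
  have hle : r * (n - r) - (s - 1) * (r * (r - 1) / 2) ≤ ∑ i ∈ Finset.range r, e i := by
    rw [hdiv]
    omega
  calc (q : ℚ) ^ (r * (n - r) - (s - 1) * (r * (r - 1) / 2))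
      ≤ (q : ℚ) ^ (∑ i ∈ Finset.range r, e i) := pow_le_pow_right₀ hq1.le hle
    _ = ∏ i ∈ Finset.range r, (q : ℚ) ^ (e i) := (Finset.prod_pow_eq_pow_sum _ _ _).symm
    _ < ∏ i ∈ Finset.range r, (((q : ℚ) ^ (n - i * s) - 1) / ((q : ℚ) ^ (r - i) - 1)) := by
        refine Finset.prod_lt_prod_of_nonempty (fun i hi => pow_pos (by linarith) _) step ?_
        exact ⟨0, Finset.mem_range.mpr (by omega)⟩
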